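/- arXiv:1904.07099 — 3 statements merged into one kernel-verified Lean document; each statement's English description precedes it below -/
import Mathlib

section
/- The L-layer linear position-encoding network extracts the inverted-order position of a one-hot vector: let E_L : ℝ^{2^L} → ℝ be the composition of L layers of convolution with the filter (1,2,1) followed by subsampling by 2 (as defined by (Tu)(t) = u(2t−1) + 2u(2t) + u(2t+1), with out-of-range indices treated as 0). Then for every a ∈ {0,…,2^L − 1}, E_L(e_a) = 2^L − a, except when a = 2^L − 1, in which case E_L(e_a) = 1 = 2^L − a as well; i.e., E_L(e_a) = 2^L − a for all a ≤ 2^L − 1 with the convention that positions are indexed from 0 and E_L(e_{2^L−1}) = 1. -/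
/-- One layer of the position-encoding network: convolution with the filter
`(1, 2, 1)` followed by subsampling by 2, out-of-range indices treated as `0`
(vectors are modelled as functions `ℕ → ℝ`; index `2t − 1` is out of range for `t = 0`). -/
noncomputable def posLayer (u : ℕ → ℝ) : ℕ → ℝ := fun t =>
  (if t = 0 then 0 else u (2 * t - 1)) + 2 * u (2 * t) + u (2 * t + 1)

/-- The `L`-layer position-encoding network `E_L`: the `L`-fold composition of `posLayer`. -/
noncomputable def posEnc : ℕ → (ℕ → ℝ) → (ℕ → ℝ)
  | 0, u => u
  | L + 1, u => posEnc L (posLayer u)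

/-- The one-hot vector `e_a` (positions indexed from `0`). -/
noncomputable def oneHot (a : ℕ) : ℕ → ℝ := fun i => if i = a then 1 else 0

lemma posLayer_add (u v : ℕ → ℝ) :
    posLayer (fun t => u t + v t) = fun t => posLayer u t + posLayer v t := by
  funext t
  simp only [posLayer]
  split_ifs <;> ring

lemma posEnc_add' (L : ℕ) (u v : ℕ → ℝ) :
    posEnc L (fun t => u t + v t) = fun t => posEnc L u t + posEnc L v t := by
  induction L generalizing u v with
  | zero => rfl
  | succ L ih => simp only [posEnc, posLayer_add, ih]

lemma posEnc_add (L : ℕ) (u v : ℕ → ℝ) (t : ℕ) :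
    posEnc L (fun s => u s + v s) t = posEnc L u t + posEnc L v t := by
  rw [posEnc_add']

lemma posLayer_even (b : ℕ) :
    posLayer (oneHot (2 * b)) = fun t => oneHot b t + oneHot b t := by
  funext t
  simp only [posLayer, oneHot]
  split_ifs <;> (first | ring1 | (exfalso; omega))

lemma posLayer_odd (b : ℕ) :
    posLayer (oneHot (2 * b + 1)) = fun t => oneHot b t + oneHot (b + 1) t := by
  funext t
  simp only [posLayer, oneHot]
  split_ifs <;> (first | ring1 | (exfalso; omega))

lemma posEnc_aux (L : ℕ) : ∀ a, a ≤ 2 ^ L →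
    posEnc L (oneHot a) 0 = if a = 2 ^ L then 0 else (2 ^ L : ℝ) - a := by
  induction L with
  | zero =>
    intro a ha
    interval_cases a <;> simp [posEnc, oneHot]
  | succ L ih =>
    intro a ha
    rcases Nat.even_or_odd a with ⟨b, hb⟩ | ⟨b, hb⟩
    · subst hb
      have hb2 : b ≤ 2 ^ L := by omega
      rw [show b + b = 2 * b by ring, posEnc, posLayer_even, posEnc_add]
      rw [ih b hb2]
      rcases eq_or_lt_of_le hb2 with h | h
      · subst h
        rw [if_pos rfl, if_pos (by omega : 2 * 2 ^ L = 2 ^ (L + 1))]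
        norm_num
      · have h1 : b ≠ 2 ^ L := h.ne
        have h2 : 2 * b ≠ 2 ^ (L + 1) := by omega
        rw [if_neg h1, if_neg h2]
        push_cast
        rw [pow_succ]
        ring
    · subst hb
      have hb2 : b + 1 ≤ 2 ^ L := by omega
      have hblt : b < 2 ^ L := by omega
      rw [posEnc, posLayer_odd, posEnc_add, ih b hblt.le, ih (b + 1) hb2]
      have h1 : b ≠ 2 ^ L := hblt.ne
      rcases eq_or_lt_of_le hb2 with h | h
      · have h3 : 2 * b + 1 ≠ 2 ^ (L + 1) := by omega
        rw [if_neg h1, if_pos h, if_neg h3]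
        have hR : (b : ℝ) + 1 = (2 : ℝ) ^ L := by exact_mod_cast h
        push_cast
        rw [pow_succ]
        linarith
      · have h2 : b + 1 ≠ 2 ^ L := h.ne
        have h3 : 2 * b + 1 ≠ 2 ^ (L + 1) := by omega
        rw [if_neg h1, if_neg h2, if_neg h3]
        push_cast
        rw [pow_succ]
        ring

/-- The `L`-layer network extracts the inverted-order position of a one-hot vector:
`E_L(e_a) = 2^L − a` for all `0 ≤ a ≤ 2^L − 1` (in particular `E_L(e_{2^L−1}) = 1`). -/
theorem posEnc_onehot (L a : ℕ) (ha : a < 2 ^ L) :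
    posEnc L (oneHot a) 0 = (2 ^ L : ℝ) - a := by
  rw [posEnc_aux L a ha.le, if_neg ha.ne]
end

section
/- The position-encoding network is linear with explicit coefficients: the map E_L : ℝ^{2^L} → ℝ defined by L layers of filtering with (1,2,1) and subsampling by 2 satisfies E_L(x) = Σ_{i=0}^{2^L−1} c_i · x_i where c_i = 2^L − i for i < 2^L − 1 and c_{2^L−1} = 1. -/
open scoped BigOperators

lemma sum_range_two_mul (n : ℕ) (f : ℕ → ℝ) :
    ∑ j ∈ Finset.range (2 * n), f j = ∑ i ∈ Finset.range n, (f (2 * i) + f (2 * i + 1)) := by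
  induction n with
  | zero => simp
  | succ n ih =>
    have h : 2 * (n + 1) = (2 * n + 1) + 1 := by ring
    rw [h, Finset.sum_range_succ, Finset.sum_range_succ, Finset.sum_range_succ, ih]
    ring

lemma posEnc_aux_s11 (L : ℕ) : ∀ y : ℕ → ℝ,
    posEnc L y 0 = ∑ i ∈ Finset.range (2 ^ L), ((2 ^ L : ℝ) - i) * y i := by
  induction L with
  | zero => intro y; simp [posEnc]
  | succ L ih =>
    intro y
    have h2 : 2 ^ (L + 1) = 2 * 2 ^ L := by ring
    rw [show posEnc (L+1) y = posEnc L (posLayer y) from rfl, ih, h2,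
      sum_range_two_mul]
    obtain ⟨m, hm⟩ : ∃ m, 2 ^ L = m + 1 := ⟨2 ^ L - 1, by have := Nat.one_le_two_pow (n := L); omega⟩
    have hmr : (2 ^ L : ℝ) = (m : ℝ) + 1 := by exact_mod_cast congrArg (Nat.cast : ℕ → ℝ) hm
    have expand : ∀ i ∈ Finset.range (2 ^ L),
        ((2 ^ L : ℝ) - i) * posLayer y i =
          ((2 ^ L : ℝ) - i) * (if i = 0 then 0 else y (2 * i - 1)) +
            (((2 ^ L : ℝ) - i) * (2 * y (2 * i)) + ((2 ^ L : ℝ) - i) * y (2 * i + 1)) := by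
      intro i _
      simp only [posLayer]; ring
    rw [Finset.sum_congr rfl expand, Finset.sum_add_distrib, hm,
      Finset.sum_range_succ', Finset.sum_range_succ, Finset.sum_range_succ]
    have ha : ∀ i ∈ Finset.range m,
        ((2 ^ L : ℝ) - (i + 1 : ℕ)) * (if (i + 1 : ℕ) = 0 then 0 else y (2 * (i + 1) - 1)) =
          ((2 ^ L : ℝ) - (i + 1 : ℕ)) * y (2 * i + 1) := by
      intro i _
      have : 2 * (i + 1) - 1 = 2 * i + 1 := by omega
      simp [this]
    rw [Finset.sum_congr rfl ha, if_pos rfl, mul_zero, add_zero, ← add_assoc, ← Finset.sum_add_distrib]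
    have hb : ∀ i ∈ Finset.range m,
        ((2 ^ L : ℝ) - (i + 1 : ℕ)) * y (2 * i + 1) +
            (((2 ^ L : ℝ) - i) * (2 * y (2 * i)) + ((2 ^ L : ℝ) - i) * y (2 * i + 1)) =
          ((2 : ℝ) ^ (L + 1) - (2 * i : ℕ)) * y (2 * i) +
            ((2 : ℝ) ^ (L + 1) - (2 * i + 1 : ℕ)) * y (2 * i + 1) := by
      intro i _
      push_cast
      ring
    rw [Finset.sum_congr rfl hb]
    have hmm : (m : ℝ) = (2 ^ L : ℝ) - 1 := by rw [hmr]; ring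
    push_cast
    rw [hmm]
    ring

/-- The position-encoding network is linear with explicit coefficients:
for `x ∈ ℝ^{2^L}`, `E_L(x) = Σ_{i=0}^{2^L−1} c_i x_i` where `c_i = 2^L − i` for
`i < 2^L − 1` and `c_{2^L−1} = 1`. -/
theorem posEnc_linear_coeffs (L : ℕ) (x : ℕ → ℝ)
    (hx : ∀ i, 2 ^ L ≤ i → x i = 0) :
    posEnc L x 0 =
      ∑ i ∈ Finset.range (2 ^ L),
        (if i = 2 ^ L - 1 then (1 : ℝ) else (2 ^ L : ℝ) - i) * x i := by
  rw [posEnc_aux_s11 L x]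
  refine Finset.sum_congr rfl fun i hi => ?_
  split_ifs with h
  · subst h
    have h1 : (1 : ℕ) ≤ 2 ^ L := Nat.one_le_two_pow
    rw [Nat.cast_sub h1]
    push_cast
    ring
  · rfl
end

section
/- Induction step for even positions: suppose E_L(e_k) = 2^L − k for a given k ∈ {0,…,2^L−1}. For the (L+1)-layer network, if x = e_{2k} ∈ ℝ^{2^{L+1}}, then the first layer output is 2·e_k, and hence E_{L+1}(e_{2k}) = 2·(2^L − k) = 2^{L+1} − 2k. -/
lemma posLayer_smul (c : ℝ) (u : ℕ → ℝ) :
    posLayer (fun i => c * u i) = fun t => c * posLayer u t := by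
  funext t
  simp only [posLayer]
  by_cases h : t = 0 <;> simp [h] <;> ring

lemma posEnc_smul (L : ℕ) (c : ℝ) (u : ℕ → ℝ) :
    posEnc L (fun i => c * u i) = fun t => c * posEnc L u t := by
  induction L generalizing u with
  | zero => rfl
  | succ L ih => simp only [posEnc, posLayer_smul, ih]

lemma posLayer_oneHot_even (k : ℕ) :
    posLayer (oneHot (2 * k)) = fun t => 2 * oneHot k t := by
  funext t
  simp only [posLayer, oneHot]
  have h1 : 2 * t + 1 ≠ 2 * k := by omega
  have h2 : (2 * t = 2 * k) ↔ t = k := by omega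
  by_cases h : t = 0
  · subst h
    by_cases hk : k = 0
    · simp [hk]
    · have h4 : 1 ≠ 2 * k := by omega
      have h5 : (0 : ℕ) ≠ 2 * k := by omega
      simp [h4, h5, Ne.symm hk]
  · have h3 : 2 * t - 1 ≠ 2 * k := by omega
    simp [h, h1, h2, h3]

/-- Induction step for even positions: if `E_L(e_k) = 2^L − k`, then for the
`(L+1)`-layer network with input `e_{2k} ∈ ℝ^{2^{L+1}}`, the first-layer output is
`2·e_k` (on the valid index range), and hence `E_{L+1}(e_{2k}) = 2^{L+1} − 2k`. -/
theorem posEnc_induction_even (L k : ℕ) (hk : k < 2 ^ L)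
    (hIH : posEnc L (oneHot k) 0 = (2 ^ L : ℝ) - k) :
    (∀ t, t < 2 ^ L → posLayer (oneHot (2 * k)) t = 2 * oneHot k t) ∧
    posEnc (L + 1) (oneHot (2 * k)) 0 = (2 ^ (L + 1) : ℝ) - 2 * k := by
  constructor
  · intro t _
    rw [posLayer_oneHot_even]
  · show posEnc L (posLayer (oneHot (2 * k))) 0 = _
    rw [posLayer_oneHot_even, posEnc_smul]
    simp only [hIH]
    push_cast
    ring
end
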